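/- Let S > 0, r > 0, and let u : ℝ → ℝ be twice continuously differentiable with 0 < u(x) < 1 for all x, satisfying u''(x) + S·f(u(x)) + (2S/r)(2u(x)−1)(u'(x))² = 0 on ℝ, lim_{x→+∞} u(x) = 0, lim_{x→+∞} u'(x) = 0, and lim_{x→+∞} u'(x)/u(x) = −√S. Then there exist a constant M > 0 such that |u'(x) + √S·u(x)| ≤ M·u(x)² for all x ≥ 0, and a constant C > 0 such that lim_{x→+∞} u(x)·e^{√S·x} = C. -/

import Mathlib

set_option maxHeartbeats 1000000

open Real Filter Topology

noncomputable def fpoly (u : ℝ) : ℝ := u * (2 * u - 1) * (1 - u)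

lemma gbound (s A U U' : ℝ) (hs : 0 < s) (hA : 0 < A) (hU : 0 < U) (hU1 : U < 1)
    (h2 : -(2*s)*U ≤ U') (hUneg : U' ≤ 0) :
    |(-(s^2 * fpoly U + A*(2*U-1)*U'^2)) - s^2*U| ≤ (3*s^2 + 4*A*s^2)*U^2 := by
  have hsq : U'^2 ≤ 4*s^2*U^2 := by nlinarith
  rw [abs_le]
  unfold fpoly
  constructor <;> nlinarith [mul_pos hA (mul_pos hU hU), sq_nonneg U',
    mul_nonneg hA.le (sq_nonneg U'), mul_nonneg (mul_nonneg hA.le hU.le) (sq_nonneg U')]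

theorem decay_rate_at_infinity (S r : ℝ) (hS : 0 < S) (hr : 0 < r)
    (u : ℝ → ℝ) (hu : ContDiff ℝ 2 u) (hb : ∀ x : ℝ, 0 < u x ∧ u x < 1)
    (hode : ∀ x : ℝ, deriv (deriv u) x + S * fpoly (u x)
      + (2 * S / r) * (2 * u x - 1) * (deriv u x) ^ 2 = 0)
    (hlim0 : Tendsto u atTop (𝓝 0))
    (hlim0' : Tendsto (deriv u) atTop (𝓝 0))
    (hratio : Tendsto (fun x : ℝ => deriv u x / u x) atTop (𝓝 (-(Real.sqrt S)))) :
    (∃ M : ℝ, 0 < M ∧ ∀ x : ℝ, 0 ≤ x →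
      |deriv u x + Real.sqrt S * u x| ≤ M * (u x) ^ 2) ∧
    (∃ C : ℝ, 0 < C ∧
      Tendsto (fun x : ℝ => u x * Real.exp (Real.sqrt S * x)) atTop (𝓝 C)) := by
  set s := Real.sqrt S with hs_def
  have hs : 0 < s := Real.sqrt_pos.mpr hS
  have hs2 : s^2 = S := Real.sq_sqrt hS.le
  -- differentiability
  have hud : Differentiable ℝ u := hu.differentiable two_ne_zero
  have hud' : Differentiable ℝ (deriv u) := by
    have h2 : ContDiff ℝ ((1:ℕ) + 1) u := by exact_mod_cast hu
    exact ((contDiff_succ_iff_deriv.mp h2).2.2).differentiable one_ne_zero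
  have hdu : ∀ x, HasDerivAt u (deriv u x) x := fun x => (hud x).hasDerivAt
  have hddu : ∀ x, HasDerivAt (deriv u) (deriv (deriv u) x) x := fun x => (hud' x).hasDerivAt
  set v := fun x => deriv u x + s * u x with hv_def
  have hcv : Continuous v := (hud'.continuous).add (continuous_const.mul hud.continuous)
  -- eventual bounds from hratio
  have h1 : ∀ᶠ x in atTop, deriv u x / u x < -(3/4*s) :=
    hratio.eventually_lt_const (by nlinarith)
  have h2 : ∀ᶠ x in atTop, -(2*s) < deriv u x / u x :=
    hratio.eventually_const_lt (by nlinarith)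
  obtain ⟨x1, hx1⟩ := eventually_atTop.mp (h1.and h2)
  set x0 := max x1 0 with hx0_def
  have hx0nn : (0:ℝ) ≤ x0 := le_max_right _ _
  have hbnd : ∀ x, x0 ≤ x → deriv u x ≤ -(3/4*s) * u x ∧ -(2*s) * u x ≤ deriv u x := by
    intro x hx
    have h := hx1 x (le_trans (le_max_left _ _) hx)
    have hup := (hb x).1
    exact ⟨le_of_lt ((div_lt_iff₀ hup).mp h.1), le_of_lt ((lt_div_iff₀ hup).mp h.2)⟩
  -- constants
  set A := 2 * S / r with hA_def
  have hA : 0 < A := by positivity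
  set K := 3*s^2 + 4*A*s^2 with hK_def
  have hK : 0 < K := by positivity
  set M2 := 2*K/(5*s) with hM2_def
  have hM2 : 0 < M2 := by positivity
  have hMK : M2 * (5/2*s) = K := by rw [hM2_def, div_mul_eq_mul_div, div_eq_iff (by positivity)]; ring
  -- key sign estimate
  have key : ∀ σ : ℝ, |σ| = 1 → ∀ x, x0 ≤ x → 0 ≤ M2 * (u x)^2 + σ * v x := by
    intro σ hσ
    set F := fun x => (M2 * (u x)^2 + σ * v x) * Real.exp (-(s*x)) with hF_def
    have hFd : ∀ x, HasDerivAt F ((M2*(2 * u x * deriv u x) + σ*(deriv (deriv u) x + s * deriv u x)) * Real.exp (-(s*x)) + (M2 * (u x)^2 + σ * v x) * (Real.exp (-(s*x)) * (-s))) x := by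
      intro x
      have h1 : HasDerivAt (fun x => (u x)^2) (2 * u x * deriv u x) x := by
        simpa using (hdu x).fun_pow 2
      have h2 : HasDerivAt v (deriv (deriv u) x + s * deriv u x) x :=
        (hddu x).add ((hdu x).const_mul s)
      have h3 : HasDerivAt (fun x => Real.exp (-(s*x))) (Real.exp (-(s*x)) * (-s)) x := by
        simpa using ((((hasDerivAt_id x).const_mul s).neg).exp)
      exact ((h1.const_mul M2).add (h2.const_mul σ)).mul h3
    have hFcont : Continuous F := by
      apply Continuous.mul
      · exact (continuous_const.mul (hud.continuous.pow 2)).add (continuous_const.mul hcv)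
      · exact Real.continuous_exp.comp (continuous_const.mul continuous_id).neg
    have hanti : AntitoneOn F (Set.Ici x0) := by
      apply antitoneOn_of_deriv_nonpos (convex_Ici x0) hFcont.continuousOn
      · exact fun x _ => (hFd x).differentiableAt.differentiableWithinAt
      · intro x hx
        rw [interior_Ici] at hx
        rw [(hFd x).deriv]
        obtain ⟨hb1, hb2⟩ := hbnd x (le_of_lt hx)
        have hup := (hb x).1
        have hu1 := (hb x).2
        have hUneg : deriv u x ≤ 0 := le_trans hb1 (by nlinarith)
        have hD : deriv (deriv u) x = -(S * fpoly (u x) + A*(2*u x - 1)*(deriv u x)^2) := by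
          have := hode x
          rw [hA_def]; linarith [hode x]
        have hg := gbound s A (u x) (deriv u x) hs hA hup hu1 hb2 hUneg
        rw [← hs2] at hD
        have hgabs : σ * (deriv (deriv u) x - s^2 * u x) ≤ K * (u x)^2 := by
          calc σ * (deriv (deriv u) x - s^2 * u x) ≤ |σ * (deriv (deriv u) x - s^2 * u x)| := le_abs_self _
            _ = |deriv (deriv u) x - s^2 * u x| := by rw [abs_mul, hσ, one_mul]
            _ ≤ K * (u x)^2 := by rw [hD, hK_def]; exact hg
        have h5 : 2 * u x * deriv u x - s * (u x)^2 ≤ -(5/2*s) * (u x)^2 := by nlinarith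
        have h6 : M2 * (2 * u x * deriv u x - s * (u x)^2) ≤ -K * (u x)^2 := by
          calc M2 * (2 * u x * deriv u x - s * (u x)^2) ≤ M2 * (-(5/2*s) * (u x)^2) :=
                mul_le_mul_of_nonneg_left h5 hM2.le
            _ = -K * (u x)^2 := by rw [← hMK]; ring
        have hepos : (0:ℝ) < Real.exp (-(s*x)) := Real.exp_pos _
        have : (M2*(2 * u x * deriv u x) + σ*(deriv (deriv u) x + s * deriv u x)) * Real.exp (-(s*x)) + (M2 * (u x)^2 + σ * v x) * (Real.exp (-(s*x)) * (-s))
            = (M2 * (2 * u x * deriv u x - s * (u x)^2) + σ * (deriv (deriv u) x - s^2 * u x)) * Real.exp (-(s*x)) := by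
          simp only [hv_def]; ring
        rw [this]
        apply mul_nonpos_of_nonpos_of_nonneg _ hepos.le
        nlinarith
    have hF0 : Tendsto F atTop (𝓝 0) := by
      have ht1 : Tendsto (fun x => M2 * (u x)^2 + σ * v x) atTop (𝓝 0) := by
        have hv0 : Tendsto v atTop (𝓝 0) := by
          have := hlim0'.add (hlim0.const_mul s)
          simpa using this
        have := ((hlim0.pow 2).const_mul M2).add (hv0.const_mul σ)
        simpa using this
      have ht2 : Tendsto (fun x : ℝ => Real.exp (-(s*x))) atTop (𝓝 0) := by
        have hst : Tendsto (fun x : ℝ => s * x) atTop atTop :=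
          Tendsto.const_mul_atTop hs tendsto_id
        have := Real.tendsto_exp_neg_atTop_nhds_zero.comp hst
        simpa [Function.comp_def] using this
      simpa using ht1.mul ht2
    intro x hx
    have hFx : 0 ≤ F x := by
      apply le_of_tendsto hF0
      filter_upwards [eventually_ge_atTop x] with y hy
      exact hanti hx (le_trans hx hy) hy
    have hepos : (0:ℝ) < Real.exp (-(s*x)) := Real.exp_pos _
    exact (mul_nonneg_iff_of_pos_right hepos).mp hFx
  have habs : ∀ x, x0 ≤ x → |v x| ≤ M2 * (u x)^2 := by
    intro x hx
    rw [abs_le]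
    constructor
    · have := key 1 (by norm_num) x hx; linarith
    · have := key (-1) (by norm_num) x hx; linarith
  -- compact part
  have hφcont : Continuous (fun x => |v x| / (u x)^2) := by
    apply hcv.abs.div (hud.continuous.pow 2)
    exact fun x => pow_ne_zero 2 (hb x).1.ne'
  obtain ⟨z, hzmem, hz⟩ := isCompact_Icc.exists_isMaxOn (⟨0, by simp [hx0nn]⟩ : (Set.Icc (0:ℝ) x0).Nonempty) hφcont.continuousOn
  set B := |v z| / (u z)^2 with hB_def
  set M := max M2 B + 1 with hM_def
  have hM : 0 < M := by
    have : M2 ≤ max M2 B := le_max_left _ _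
    linarith
  have hpart1 : ∀ x : ℝ, 0 ≤ x → |v x| ≤ M * (u x)^2 := by
    intro x hx
    have hu2 : (0:ℝ) < (u x)^2 := pow_pos (hb x).1 2
    rcases le_total x x0 with h | h
    · have := hz ⟨hx, h⟩
      have hdiv : |v x| / (u x)^2 ≤ B := this
      have : |v x| ≤ B * (u x)^2 := (div_le_iff₀ hu2).mp hdiv
      have hBM : B ≤ M := by
        have := le_max_right M2 B; linarith
      nlinarith
    · have := habs x h
      have hM2M : M2 ≤ M := by
        have := le_max_left M2 B; linarith
      nlinarith
  constructor
  · exact ⟨M, hM, fun x hx => hpart1 x hx⟩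
  -- Part 2
  · set α := 3/4*s with hα_def
    have hα : 0 < α := by positivity
    set p := fun x => Real.log (u x) + s * x + (M/α) * u x with hp_def
    set q := fun x => Real.log (u x) + s * x - (M/α) * u x with hq_def
    have hlogd : ∀ x, HasDerivAt (fun x => Real.log (u x) + s * x) (v x / u x) x := by
      intro x
      have hl : HasDerivAt (fun x => Real.log (u x)) (deriv u x / u x) x :=
        (hdu x).log (hb x).1.ne'
      have hsx : HasDerivAt (fun x : ℝ => s * x) s x := by
        simpa using (hasDerivAt_id x).const_mul s
      have := hl.fun_add hsx
      refine this.congr_deriv ?_; symm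
      show (deriv u x + s * u x) / u x = _; rw [add_div, mul_div_cancel_right₀ _ (hb x).1.ne']
    have hpd : ∀ x, HasDerivAt p (v x / u x + (M/α) * deriv u x) x :=
      fun x => (hlogd x).add ((hdu x).const_mul (M/α))
    have hqd : ∀ x, HasDerivAt q (v x / u x - (M/α) * deriv u x) x :=
      fun x => (hlogd x).sub ((hdu x).const_mul (M/α))
    have hvu : ∀ x, x0 ≤ x → |v x / u x| ≤ M * u x := by
      intro x hx
      have hup := (hb x).1
      rw [abs_div, abs_of_pos hup, div_le_iff₀ hup]
      calc |v x| ≤ M * (u x)^2 := hpart1 x (le_trans hx0nn hx)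
        _ = M * u x * u x := by ring
    have hcont_lg : ContinuousOn (fun x => Real.log (u x) + s * x) Set.univ := by
      intro x _
      exact ((hlogd x).continuousAt).continuousWithinAt
    have hpanti : AntitoneOn p (Set.Ici x0) := by
      apply antitoneOn_of_deriv_nonpos (convex_Ici x0)
      · exact fun x _ => ((hpd x).continuousAt).continuousWithinAt
      · exact fun x _ => (hpd x).differentiableAt.differentiableWithinAt
      · intro x hx
        rw [interior_Ici] at hx
        rw [(hpd x).deriv]
        have hup := (hb x).1
        have h1 : v x / u x ≤ M * u x := le_trans (le_abs_self _) (hvu x hx.le)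
        have h2 : (M/α) * deriv u x ≤ (M/α) * (-(α) * u x) := by
          apply mul_le_mul_of_nonneg_left _ (by positivity)
          linarith [(hbnd x hx.le).1]
        have h3 : (M/α) * (-(α) * u x) = -(M * u x) := by
          field_simp
        linarith
    have hqmono : MonotoneOn q (Set.Ici x0) := by
      apply monotoneOn_of_deriv_nonneg (convex_Ici x0)
      · exact fun x _ => ((hqd x).continuousAt).continuousWithinAt
      · exact fun x _ => (hqd x).differentiableAt.differentiableWithinAt
      · intro x hx
        rw [interior_Ici] at hx
        rw [(hqd x).deriv]
        have hup := (hb x).1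
        have h1 : -(M * u x) ≤ v x / u x := by
          have := (abs_le.mp (hvu x hx.le)).1; linarith
        have h2 : (M/α) * deriv u x ≤ (M/α) * (-(α) * u x) := by
          apply mul_le_mul_of_nonneg_left _ (by positivity)
          linarith [(hbnd x hx.le).1]
        have h3 : (M/α) * (-(α) * u x) = -(M * u x) := by
          field_simp
        linarith
    have hpq : ∀ x, q x ≤ p x := by
      intro x
      have hux := (hb x).1
      have : 0 ≤ (M/α) * u x := by positivity
      simp only [hp_def, hq_def]; linarith
    have hlb : ∀ x, x0 ≤ x → q x0 ≤ p x := by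
      intro x hx
      exact le_trans (hqmono (Set.self_mem_Ici) hx hx) (hpq x)
    set P := fun x => p (max x x0) with hP_def
    have hPanti : Antitone P := by
      intro a b hab
      exact hpanti (le_max_right a x0) (le_max_right b x0) (max_le_max hab le_rfl)
    have hPbdd : BddBelow (Set.range P) := by
      refine ⟨q x0, ?_⟩
      rintro _ ⟨x, rfl⟩
      exact hlb _ (le_max_right x x0)
    have hPtend : Tendsto P atTop (𝓝 (⨅ x, P x)) := tendsto_atTop_ciInf hPanti hPbdd
    set L := ⨅ x, P x with hL_def
    have hptend : Tendsto p atTop (𝓝 L) := by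
      refine Tendsto.congr' ?_ hPtend
      filter_upwards [eventually_ge_atTop x0] with x hx
      simp [hP_def, max_eq_left hx]
    have hhtend : Tendsto (fun x => Real.log (u x) + s * x) atTop (𝓝 L) := by
      have := hptend.sub (hlim0.const_mul (M/α))
      simp only [mul_zero, sub_zero] at this
      apply this.congr
      intro x
      simp only [hp_def]; ring
    refine ⟨Real.exp L, Real.exp_pos L, ?_⟩
    have := (Real.continuous_exp.tendsto L).comp hhtend
    apply this.congr
    intro x
    simp only [Function.comp_apply]
    rw [Real.exp_add, Real.exp_log (hb x).1]
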